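/- Let n ∈ ℕ and k ∈ ℕ be arbitrary. Suppose f₀, …, f_k : ℂ → ℂ are functions such that for every polynomial p ∈ 𝒫ₙ the function x ↦ Σ_{i=0}^{k} f_i(x)·(eval x (p⁽ⁱ⁾)) is the evaluation function of some element of 𝒫ₙ. Then there exists an operator P in the ℂ-linear span of all compositions of at most n elements of {J⁺, J⁻, J⁰} (the empty composition being the identity) such that for every p ∈ 𝒫ₙ and every x ∈ ℂ one has Σ_{i=0}^{k} f_i(x)·(eval x (p⁽ⁱ⁾)) = eval x (P p). -/

import Mathlib

noncomputable section

open Polynomial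

/-- The formal derivative as a `ℂ`-linear endomorphism of `Polynomial ℂ`. -/
def D1 : Module.End ℂ (Polynomial ℂ) := Polynomial.derivative

/-- Multiplication by a polynomial `g` as an endomorphism. -/
def M1 (g : Polynomial ℂ) : Module.End ℂ (Polynomial ℂ) := LinearMap.mulLeft ℂ g

/-- The module `𝒫ₙ`, the span of `Xⁱ` for `0 ≤ i ≤ n`. -/
def Pmod (n : ℕ) : Submodule ℂ (Polynomial ℂ) :=
  Submodule.span ℂ {p : Polynomial ℂ | ∃ i ≤ n, p = X ^ i}

/-- `J⁺ = M_{X²}∘D − n·M_X`. -/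
def Jp (n : ℕ) : Module.End ℂ (Polynomial ℂ) := M1 (X ^ 2) * D1 - (n : ℂ) • M1 X

/-- `J⁻ = D`. -/
def Jm : Module.End ℂ (Polynomial ℂ) := D1

/-- `J⁰ = M_X∘D − (n/2)·id`. -/
def J0 (n : ℕ) : Module.End ℂ (Polynomial ℂ) := M1 X * D1 - ((n : ℂ) / 2) • 1

/-- All compositions (products) of at most `k` elements of `S`; the empty
composition is the identity. -/
def prodsLE (k : ℕ) (S : Set (Module.End ℂ (Polynomial ℂ))) :
    Set (Module.End ℂ (Polynomial ℂ)) :=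
  {T | ∃ l : List (Module.End ℂ (Polynomial ℂ)),
    l.length ≤ k ∧ (∀ a ∈ l, a ∈ S) ∧ l.prod = T}

lemma J0_X_pow (n j : ℕ) : J0 n ((X : Polynomial ℂ) ^ j) = ((j : ℂ) - n / 2) • X ^ j := by
  have h : (X : Polynomial ℂ) * derivative (X ^ j) = (j : ℂ) • X ^ j := by
    cases j with
    | zero => simp
    | succ m => rw [derivative_X_pow]; push_cast; rw [smul_eq_C_mul]; ring_nf
      
  simp only [J0, M1, D1, LinearMap.sub_apply, Module.End.mul_apply, LinearMap.smul_apply,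
    LinearMap.mulLeft_apply, Module.End.one_apply]
  rw [show (Polynomial.derivative : Module.End ℂ (Polynomial ℂ)) (X^j) = derivative (X^j) from rfl, h, sub_smul]

lemma Jp_X_pow (n j : ℕ) : Jp n ((X : Polynomial ℂ) ^ j) = ((j : ℂ) - n) • X ^ (j + 1) := by
  have h : (X : Polynomial ℂ)^2 * derivative (X ^ j) = (j : ℂ) • X ^ (j+1) := by
    cases j with
    | zero => simp
    | succ m => rw [derivative_X_pow]; push_cast; rw [smul_eq_C_mul]; ring_nf
  simp only [Jp, M1, D1, LinearMap.sub_apply, Module.End.mul_apply, LinearMap.smul_apply,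
    LinearMap.mulLeft_apply]
  rw [show (Polynomial.derivative : Module.End ℂ (Polynomial ℂ)) (X^j) = derivative (X^j) from rfl, h, sub_smul]
  rw [pow_succ]; ring_nf

lemma Jm_pow_X_pow (e j : ℕ) : (Jm ^ e) ((X : Polynomial ℂ) ^ j) = (j.descFactorial e : ℂ) • X ^ (j - e) := by
  rw [Jm, D1, Module.End.pow_apply]
  have : (⇑(Polynomial.derivative : Module.End ℂ (Polynomial ℂ)))^[e] ((X:Polynomial ℂ)^j) = (⇑(Polynomial.derivative : Polynomial ℂ →ₗ[ℂ] Polynomial ℂ))^[e] (X^j) := rfl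
  rw [this, Polynomial.iterate_derivative_X_pow_eq_smul]

lemma Jp_pow_X_pow (n d j : ℕ) :
    ((Jp n) ^ d) ((X : Polynomial ℂ) ^ j) =
      (∏ i ∈ Finset.range d, ((j : ℂ) + i - n)) • X ^ (j + d) := by
  induction d with
  | zero => simp
  | succ m ih =>
    rw [pow_succ', Module.End.mul_apply, ih, map_smul, Jp_X_pow, Finset.prod_range_succ,
      smul_smul]
    push_cast
    ring_nf

lemma aeval_eigen (g : Module.End ℂ (Polynomial ℂ)) (μ : ℂ) (v : Polynomial ℂ)
    (h : g v = μ • v) (L : Polynomial ℂ) :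
    (Polynomial.aeval g L) v = (L.eval μ) • v := by
  have hpow : ∀ s : ℕ, (g ^ s) v = μ ^ s • v := by
    intro s
    induction s with
    | zero => simp
    | succ m ih => rw [pow_succ', Module.End.mul_apply, ih, map_smul, h, smul_smul, pow_succ', mul_comm]
  induction L using Polynomial.induction_on' with
  | add p q hp hq => rw [map_add, LinearMap.add_apply, hp, hq, eval_add, add_smul]
  | monomial s c =>
    rw [aeval_monomial, eval_monomial, Module.End.mul_apply, hpow, map_smul,
      Module.algebraMap_end_apply, smul_smul, mul_comm]

lemma mem_prodsLE_left (n d s : ℕ) (h : d + s ≤ n) :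
    (Jp n) ^ d * (J0 n) ^ s ∈ prodsLE n {Jp n, Jm, J0 n} := by
  refine ⟨List.replicate d (Jp n) ++ List.replicate s (J0 n), by simpa using h, ?_, by
    rw [List.prod_append, List.prod_replicate, List.prod_replicate]⟩
  intro a ha
  rcases List.mem_append.1 ha with h' | h' <;> rw [List.eq_of_mem_replicate h'] <;> simp

lemma mem_prodsLE_right (n e s : ℕ) (h : e + s ≤ n) :
    (J0 n) ^ s * Jm ^ e ∈ prodsLE n {Jp n, Jm, J0 n} := by
  refine ⟨List.replicate s (J0 n) ++ List.replicate e Jm, by simpa using by omega, ?_, by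
    rw [List.prod_append, List.prod_replicate, List.prod_replicate]⟩
  intro a ha
  rcases List.mem_append.1 ha with h' | h' <;> rw [List.eq_of_mem_replicate h'] <;> simp

lemma nodes_inj (n : ℕ) (s : Finset ℕ) :
    Set.InjOn (fun m : ℕ => (m : ℂ) - n / 2) ↑s := by
  intro x _ y _ h
  simp only at h
  have : (x : ℂ) = y := sub_left_inj.mp h
  exact_mod_cast this

lemma matrix_unit (n a b : ℕ) :
    ∃ P ∈ Submodule.span ℂ (prodsLE n {Jp n, Jm, J0 n}),
      a ≤ n → b ≤ n → ∀ j ≤ n, P ((X : Polynomial ℂ) ^ j) = if j = b then X ^ a else 0 := by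
  by_cases hab : a ≤ n ∧ b ≤ n
  swap
  · exact ⟨0, Submodule.zero_mem _, fun ha hb => absurd ⟨ha, hb⟩ hab⟩
  obtain ⟨ha, hb⟩ := hab
  set v : ℕ → ℂ := fun m : ℕ => (m : ℂ) - n / 2 with hv
  by_cases hba : b ≤ a
  · -- raising case
    set d := a - b with hd
    have hdn : d ≤ n := le_trans (Nat.sub_le _ _) ha
    have hbnd : b ≤ n - d := by omega
    set c : ℂ := ∏ i ∈ Finset.range d, ((b : ℂ) + i - n) with hc
    have hcne : c ≠ 0 := by
      rw [hc]
      apply Finset.prod_ne_zero_iff.2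
      intro i hi
      have : b + i < n := by
        have := Finset.mem_range.1 hi
        omega
      intro h0
      have h2 : ((b + i : ℕ) : ℂ) = ((n : ℕ) : ℂ) := by push_cast; linear_combination h0
      have := Nat.cast_inj.mp h2
      omega
    set r : ℕ → ℂ := fun m => if m = b then c⁻¹ else 0 with hr
    set L : Polynomial ℂ := Lagrange.interpolate (Finset.range (n - d + 1)) v r with hL
    have hinj := nodes_inj n (Finset.range (n - d + 1))
    have hLdeg : L.natDegree < n - d + 1 := by
      by_cases hL0 : L = 0
      · rw [hL0]; simp
      · rw [Polynomial.natDegree_lt_iff_degree_lt hL0]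
        simpa [hL] using Lagrange.degree_interpolate_lt r hinj
    refine ⟨Jp n ^ d * Polynomial.aeval (J0 n) L, ?_, ?_⟩
    · rw [Polynomial.aeval_eq_sum_range' hLdeg, Finset.mul_sum]
      apply Submodule.sum_mem
      intro s hs
      rw [mul_smul_comm]
      apply Submodule.smul_mem
      apply Submodule.subset_span
      exact mem_prodsLE_left n d s (by have := Finset.mem_range.1 hs; omega)
    · intro _ _ j hj
      rw [Module.End.mul_apply, aeval_eigen (J0 n) (v j) _ (J0_X_pow n j) L, map_smul,
        Jp_pow_X_pow]
      by_cases hjb : j = b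
      · rw [if_pos hjb]
        rw [Lagrange.eval_interpolate_at_node r hinj
          (Finset.mem_range.2 (by omega : j < n - d + 1))]
        have hrj : r j = c⁻¹ := by rw [hr]; simp [hjb]
        have hprod : (∏ i ∈ Finset.range d, ((j : ℂ) + i - n)) = c := by rw [hc, hjb]
        rw [hrj, smul_smul, hprod, inv_mul_cancel₀ hcne, one_smul]
        congr 1
        omega
      · rw [if_neg hjb]
        by_cases hjnd : j ≤ n - d
        · rw [Lagrange.eval_interpolate_at_node r hinj (Finset.mem_range.2 (by omega))]
          rw [hr]
          simp [hjb]
        · have hd1 : n - j < d := by omega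
          have hprod : (∏ i ∈ Finset.range d, ((j : ℂ) + i - n)) = 0 := by
            apply Finset.prod_eq_zero (Finset.mem_range.2 hd1)
            have : ((j : ℂ) + (n - j : ℕ)) = (n : ℂ) := by
              push_cast [Nat.cast_sub hj]; ring
            rw [this, sub_self]
          rw [hprod, zero_smul, smul_zero]
  · -- lowering case
    push_neg at hba
    set e := b - a with he
    have hen : e ≤ n := le_trans (Nat.sub_le _ _) hb
    have hane : a ≤ n - e := by omega
    have hdfne : ((b.descFactorial e : ℕ) : ℂ) ≠ 0 := by
      have : b.descFactorial e ≠ 0 := by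
        rw [Ne, Nat.descFactorial_eq_zero_iff_lt]
        omega
      exact_mod_cast this
    set r : ℕ → ℂ := fun m => if m = a then ((b.descFactorial e : ℕ) : ℂ)⁻¹ else 0 with hr
    set L : Polynomial ℂ := Lagrange.interpolate (Finset.range (n - e + 1)) v r with hL
    have hinj := nodes_inj n (Finset.range (n - e + 1))
    have hLdeg : L.natDegree < n - e + 1 := by
      by_cases hL0 : L = 0
      · rw [hL0]; simp
      · rw [Polynomial.natDegree_lt_iff_degree_lt hL0]
        simpa [hL] using Lagrange.degree_interpolate_lt r hinj
    refine ⟨Polynomial.aeval (J0 n) L * Jm ^ e, ?_, ?_⟩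
    · rw [Polynomial.aeval_eq_sum_range' hLdeg, Finset.sum_mul]
      apply Submodule.sum_mem
      intro s hs
      rw [smul_mul_assoc]
      apply Submodule.smul_mem
      apply Submodule.subset_span
      exact mem_prodsLE_right n e s (by have := Finset.mem_range.1 hs; omega)
    · intro _ _ j hj
      rw [Module.End.mul_apply, Jm_pow_X_pow, map_smul,
        aeval_eigen (J0 n) (v (j - e)) _ (J0_X_pow n (j - e)) L]
      by_cases hjb : j = b
      · rw [if_pos hjb]
        have hja : j - e = a := by omega
        rw [hja]
        rw [Lagrange.eval_interpolate_at_node r hinj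
          (Finset.mem_range.2 (by omega : a < n - e + 1))]
        have hra : r a = ((b.descFactorial e : ℕ) : ℂ)⁻¹ := by rw [hr]; simp
        rw [hra, smul_smul, hjb, mul_inv_cancel₀ hdfne, one_smul]
      · rw [if_neg hjb]
        by_cases hje : j < e
        · rw [Nat.descFactorial_eq_zero_iff_lt.2 hje]
          simp
        · have hjea : j - e ≠ a := by omega
          rw [Lagrange.eval_interpolate_at_node r hinj (Finset.mem_range.2 (by omega))]
          rw [hr]
          simp [hjea]

lemma X_pow_mem_Pmod (n j : ℕ) (hj : j ≤ n) : (X : Polynomial ℂ) ^ j ∈ Pmod n :=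
  Submodule.subset_span ⟨j, hj, rfl⟩

lemma Pmod_natDegree (n : ℕ) {q : Polynomial ℂ} (h : q ∈ Pmod n) : q.natDegree ≤ n := by
  have hle : Pmod n ≤ Polynomial.degreeLE ℂ n := by
    rw [Pmod, Submodule.span_le]
    rintro p ⟨i, hi, rfl⟩
    rw [SetLike.mem_coe, Polynomial.mem_degreeLE]
    calc (X ^ i : Polynomial ℂ).degree ≤ i := degree_X_pow_le i
    _ ≤ (n : WithBot ℕ) := by exact_mod_cast hi
  exact Polynomial.natDegree_le_iff_degree_le.2 (Polynomial.mem_degreeLE.1 (hle h))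

theorem stmt1 (n k : ℕ) (f : ℕ → ℂ → ℂ)
    (hpres : ∀ p ∈ Pmod n, ∃ q ∈ Pmod n, ∀ x : ℂ,
      ∑ i ∈ Finset.range (k + 1), f i x * ((D1 ^ i) p).eval x = q.eval x) :
    ∃ P ∈ Submodule.span ℂ (prodsLE n {Jp n, Jm, J0 n}),
      ∀ p ∈ Pmod n, ∀ x : ℂ,
        ∑ i ∈ Finset.range (k + 1), f i x * ((D1 ^ i) p).eval x = (P p).eval x := by
  classical
  choose Pab hPmem hPval using matrix_unit n
  choose qq hqq1 hqq2 using fun (b : ℕ) (hb : b ≤ n) =>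
    hpres ((X : Polynomial ℂ) ^ b) (X_pow_mem_Pmod n b hb)
  set q' : ℕ → Polynomial ℂ := fun b => if hb : b ≤ n then qq b hb else 0 with hq'
  set P : Module.End ℂ (Polynomial ℂ) :=
    ∑ b ∈ Finset.range (n + 1), ∑ a ∈ Finset.range (n + 1), (q' b).coeff a • Pab a b with hP
  have hmem : P ∈ Submodule.span ℂ (prodsLE n {Jp n, Jm, J0 n}) := by
    apply Submodule.sum_mem
    intro b _
    apply Submodule.sum_mem
    intro a _
    exact Submodule.smul_mem _ _ (hPmem a b)
  have hPX : ∀ j ≤ n, P ((X : Polynomial ℂ) ^ j) = q' j := by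
    intro j hj
    have h1 : P ((X : Polynomial ℂ) ^ j) =
        ∑ b ∈ Finset.range (n + 1), ∑ a ∈ Finset.range (n + 1),
          (q' b).coeff a • (Pab a b ((X : Polynomial ℂ) ^ j)) := by
      rw [hP]
      simp only [LinearMap.coe_sum, Finset.sum_apply, LinearMap.smul_apply]
    rw [h1, Finset.sum_eq_single j]
    · have h2 : ∀ a ∈ Finset.range (n + 1),
          (q' j).coeff a • (Pab a j ((X : Polynomial ℂ) ^ j)) = (q' j).coeff a • X ^ a := by
        intro a haa
        have han : a ≤ n := Nat.lt_succ_iff.1 (Finset.mem_range.1 haa)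
        rw [hPval a j han hj j hj, if_pos rfl]
      rw [Finset.sum_congr rfl h2]
      have hdeg : (q' j).natDegree < n + 1 := by
        rw [Nat.lt_succ_iff]
        apply Pmod_natDegree n
        rw [hq']
        simp only [dif_pos hj]
        exact hqq1 j hj
      conv_rhs => rw [Polynomial.as_sum_range' _ _ hdeg]
      apply Finset.sum_congr rfl
      intro a _
      rw [← Polynomial.C_mul_X_pow_eq_monomial, smul_eq_C_mul]
    · intro b hbr hbj
      apply Finset.sum_eq_zero
      intro a har
      rw [hPval a b (Nat.lt_succ_iff.1 (Finset.mem_range.1 har))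
        (Nat.lt_succ_iff.1 (Finset.mem_range.1 hbr)) j hj, if_neg (Ne.symm hbj), smul_zero]
    · intro hjr
      exact absurd (Finset.mem_range.2 (Nat.lt_succ_iff.2 hj)) hjr
  refine ⟨P, hmem, ?_⟩
  intro p hp
  induction hp using Submodule.span_induction with
  | mem p hpmem =>
    obtain ⟨j, hj, rfl⟩ := hpmem
    intro x
    rw [hPX j hj]
    have : q' j = qq j hj := by rw [hq']; simp only [dif_pos hj]
    rw [this]
    exact hqq2 j hj x
  | zero => intro x; simp
  | add p1 p2 _ _ h1 h2 =>
    intro x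
    simp only [map_add, Polynomial.eval_add, mul_add, Finset.sum_add_distrib]
    rw [h1 x, h2 x]
  | smul c p1 _ h1 =>
    intro x
    simp only [map_smul, Polynomial.eval_smul, smul_eq_mul]
    rw [← h1 x, Finset.mul_sum]
    apply Finset.sum_congr rfl
    intro i _
    ring
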